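/- Let A ∈ ℝ^{m×n} be such that x = 0 is the only solution of {x ≥ 0, Ax ≤ 0}, and let g(y) = vol({x ∈ ℝ^n : x ≥ 0, Ax ≤ y}) for y ∈ ℝ^m. Then for every λ ∈ ℝ^m with λ > 0 and Aᵀλ > 0 componentwise, the integral ∫_{ℝ^m} e^{-⟨λ,y⟩} g(y) dy equals 1/(∏_{i=1}^m λ_i · ∏_{j=1}^n (Aᵀλ)_j). -/

import Mathlib

open MeasureTheory Set Filter

lemma aux_one_dim {b : ℝ} (hb : 0 < b) (a : ℝ) :
    ∫⁻ t in Set.Ici a, ENNReal.ofReal (Real.exp (-(b * t)))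
      = ENNReal.ofReal (Real.exp (-(b * a)) / b) := by
  rw [← restrict_Ioi_eq_restrict_Ici]
  have hint : IntegrableOn (fun x => Real.exp (-(b * x))) (Ioi a) :=
    by simpa [neg_mul] using exp_neg_integrableOn_Ioi a hb
  have hval : ∫ x in Ioi a, Real.exp (-(b * x)) = Real.exp (-(b * a)) / b := by
    have hderiv : ∀ x ∈ Ici a, HasDerivAt (fun x => -Real.exp (-(b * x)) / b)
        (Real.exp (-(b * x))) x := by
      intro x _
      have h1 : HasDerivAt (fun x : ℝ => -(b * x)) (-b) x := by
        simpa [Pi.neg_def] using ((hasDerivAt_id x).const_mul b).neg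
      have h2 := (h1.exp).neg.div_const b
      refine h2.congr_deriv ?_
      field_simp
    have htend : Tendsto (fun x => -Real.exp (-(b * x)) / b) atTop (nhds 0) := by
      have : Tendsto (fun x : ℝ => -(b * x)) atTop atBot := by
        simpa using tendsto_neg_atBot_iff.mpr ((tendsto_const_mul_atTop_of_pos hb).mpr tendsto_id)
      simpa using ((Real.tendsto_exp_atBot.comp this).neg.div_const b)
    rw [integral_Ioi_of_hasDerivAt_of_tendsto' hderiv hint htend]
    ring
  rw [← hval, ← ofReal_integral_eq_lintegral_ofReal hint]
  exact Filter.Eventually.of_forall fun x => (Real.exp_pos _).le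

lemma aux_lintegral_prod {k : ℕ} (f : Fin k → ℝ → ENNReal) (hf : ∀ i, Measurable (f i)) :
    (∫⁻ y : Fin k → ℝ, ∏ i, f i (y i)) = ∏ i, ∫⁻ t : ℝ, f i t := by
  induction k with
  | zero =>
      rw [Finset.univ_eq_empty]
      simp only [Finset.prod_empty]
      rw [lintegral_one, MeasureTheory.volume_pi, Measure.pi_empty_univ]
  | succ n ih =>
    have hmp := (measurePreserving_piFinSuccAbove (fun _ : Fin (n+1) => (volume : Measure ℝ)) 0).symm
    rw [MeasureTheory.volume_pi, ← hmp.lintegral_comp_emb (MeasurableEquiv.measurableEmbedding _)]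
    simp only [MeasurableEquiv.piFinSuccAbove_symm_apply, Fin.insertNthEquiv,
      Fin.prod_univ_succ, Fin.insertNth_zero, Equiv.coe_fn_mk, Fin.cons_succ, Fin.cons_zero,
      Fin.zero_succAbove, cast_eq]
    rw [lintegral_prod_mul (f := f 0) (g := fun v : Fin n → ℝ => ∏ i : Fin n, f i.succ (v i))
      ((hf 0).aemeasurable)
      (Finset.measurable_prod Finset.univ
        (fun i _ => (hf i.succ).comp (measurable_pi_apply i))).aemeasurable]
    rw [← ih (fun i => f i.succ) (fun i => hf i.succ)]
    rfl

lemma aux_multi {k : ℕ} (c a : Fin k → ℝ) (hc : ∀ i, 0 < c i) :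
    ∫⁻ y : Fin k → ℝ in {y | ∀ i, a i ≤ y i},
        ENNReal.ofReal (Real.exp (-(∑ i, c i * y i)))
      = ∏ i, ENNReal.ofReal (Real.exp (-(c i * a i)) / c i) := by
  have hS : MeasurableSet {y : Fin k → ℝ | ∀ i, a i ≤ y i} := by
    have : {y : Fin k → ℝ | ∀ i, a i ≤ y i} = Set.pi Set.univ (fun i => Set.Ici (a i)) := by
      ext y; simp [Set.mem_pi, Pi.le_def]
    rw [this]
    exact MeasurableSet.univ_pi (fun i => measurableSet_Ici)
  rw [← lintegral_indicator hS]
  have heq : ∀ y : Fin k → ℝ,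
      Set.indicator {y : Fin k → ℝ | ∀ i, a i ≤ y i}
        (fun y => ENNReal.ofReal (Real.exp (-(∑ i, c i * y i)))) y
      = ∏ i, Set.indicator (Set.Ici (a i))
          (fun t => ENNReal.ofReal (Real.exp (-(c i * t)))) (y i) := by
    intro y
    by_cases hy : ∀ i, a i ≤ y i
    · have hy' : y ∈ {y : Fin k → ℝ | ∀ i, a i ≤ y i} := hy
      rw [Set.indicator_of_mem hy']
      have : ∀ i, y i ∈ Set.Ici (a i) := fun i => hy i
      rw [Finset.prod_congr rfl (fun i _ => Set.indicator_of_mem (this i) _)]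
      rw [← ENNReal.ofReal_prod_of_nonneg (fun i _ => (Real.exp_pos _).le)]
      congr 1
      rw [← Real.exp_sum]
      congr 1
      rw [← Finset.sum_neg_distrib]
    · have hy' : y ∉ {y : Fin k → ℝ | ∀ i, a i ≤ y i} := hy
      rw [Set.indicator_of_notMem hy']
      push_neg at hy
      obtain ⟨i, hi⟩ := hy
      have : Set.indicator (Set.Ici (a i))
          (fun t => ENNReal.ofReal (Real.exp (-(c i * t)))) (y i) = 0 :=
        Set.indicator_of_notMem (by simpa using hi) _
      exact (Finset.prod_eq_zero (Finset.mem_univ i) this).symm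
  simp_rw [heq]
  rw [aux_lintegral_prod (fun i t => Set.indicator (Set.Ici (a i))
      (fun t => ENNReal.ofReal (Real.exp (-(c i * t)))) t)
    (fun i => (Measurable.ennreal_ofReal (by fun_prop)).indicator measurableSet_Ici)]
  refine Finset.prod_congr rfl fun i _ => ?_
  rw [lintegral_indicator measurableSet_Ici]
  exact aux_one_dim (hc i) (a i)

theorem stmt_3 (m n : ℕ) (A : Matrix (Fin m) (Fin n) ℝ)
    (h : ∀ x : Fin n → ℝ, (∀ j, 0 ≤ x j) → (∀ i, A.mulVec x i ≤ 0) → x = 0)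
    (l : Fin m → ℝ) (hl : ∀ i, 0 < l i) (hAl : ∀ j, 0 < A.transpose.mulVec l j) :
    ∫ y : Fin m → ℝ,
        Real.exp (-(∑ i, l i * y i)) *
          (volume {x : Fin n → ℝ | (∀ j, 0 ≤ x j) ∧ ∀ i, A.mulVec x i ≤ y i}).toReal
      = 1 / ((∏ i, l i) * ∏ j, A.transpose.mulVec l j) := by
  classical
  set c : Fin n → ℝ := A.transpose.mulVec l with hc
  -- key algebraic identity
  have hkey : ∀ x : Fin n → ℝ, ∑ i, l i * A.mulVec x i = ∑ j, c j * x j := by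
    intro x
    simp only [hc, Matrix.mulVec, dotProduct, Matrix.transpose_apply, Finset.sum_mul,
      Finset.mul_sum]
    rw [Finset.sum_comm]
    congr 1; ext j; congr 1; ext i; ring
  set T : Set ((Fin m → ℝ) × (Fin n → ℝ)) :=
    {p | (∀ j, 0 ≤ p.2 j) ∧ ∀ i, A.mulVec p.2 i ≤ p.1 i} with hTdef
  have hmv : ∀ i, Measurable fun x : Fin n → ℝ => A.mulVec x i := by
    intro i
    have : (fun x : Fin n → ℝ => A.mulVec x i) = fun x => ∑ j, A i j * x j := rfl
    rw [this]
    exact Finset.measurable_sum _ fun j _ => (measurable_pi_apply j).const_mul _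
  have hT : MeasurableSet T := by
    have hTsplit : T = {p : (Fin m → ℝ) × (Fin n → ℝ) | ∀ j, 0 ≤ p.2 j}
        ∩ {p : (Fin m → ℝ) × (Fin n → ℝ) | ∀ i, A.mulVec p.2 i ≤ p.1 i} := rfl
    rw [hTsplit]
    apply MeasurableSet.inter
    · rw [Set.setOf_forall]
      exact MeasurableSet.iInter fun j =>
        measurableSet_le measurable_const (measurable_snd.eval (a := j))
    · rw [Set.setOf_forall]
      exact MeasurableSet.iInter fun i =>
        measurableSet_le ((hmv i).comp measurable_snd) (measurable_fst.eval (a := i))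
  have hSeq : ∀ y : Fin m → ℝ,
      {x : Fin n → ℝ | (∀ j, 0 ≤ x j) ∧ ∀ i, A.mulVec x i ≤ y i} = Prod.mk y ⁻¹' T := by
    intro y; rfl
  have hmeasvol : Measurable fun y : Fin m → ℝ =>
      volume {x : Fin n → ℝ | (∀ j, 0 ≤ x j) ∧ ∀ i, A.mulVec x i ≤ y i} := by
    simp_rw [hSeq]
    exact measurable_measure_prodMk_left hT
  -- finiteness of the volume
  have hfin : ∀ y : Fin m → ℝ,
      volume {x : Fin n → ℝ | (∀ j, 0 ≤ x j) ∧ ∀ i, A.mulVec x i ≤ y i} ≠ ⊤ := by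
    intro y
    set b : ℝ := ∑ i, l i * y i with hb
    have hsub : {x : Fin n → ℝ | (∀ j, 0 ≤ x j) ∧ ∀ i, A.mulVec x i ≤ y i}
        ⊆ Set.pi Set.univ fun j => Set.Icc 0 (b / c j) := by
      rintro x ⟨hx0, hxA⟩ j _
      refine ⟨hx0 j, ?_⟩
      rw [le_div_iff₀ (hAl j), mul_comm]
      calc c j * x j ≤ ∑ j', c j' * x j' := by
            apply Finset.single_le_sum (f := fun j' => c j' * x j') (fun j' _ =>
              mul_nonneg (hAl j').le (hx0 j')) (Finset.mem_univ j)
        _ = ∑ i, l i * A.mulVec x i := (hkey x).symm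
        _ ≤ b := Finset.sum_le_sum fun i _ => by
              exact mul_le_mul_of_nonneg_left (hxA i) (hl i).le
    refine ne_top_of_le_ne_top ?_ (measure_mono hsub)
    rw [volume_pi_pi]
    exact (ENNReal.prod_lt_top fun j _ => (by simp [Real.volume_Icc] : _ < ⊤)).ne
  -- pass to lintegral
  have hnn : 0 ≤ᵐ[volume] fun y : Fin m → ℝ =>
      Real.exp (-(∑ i, l i * y i)) *
        (volume {x : Fin n → ℝ | (∀ j, 0 ≤ x j) ∧ ∀ i, A.mulVec x i ≤ y i}).toReal :=
    Filter.Eventually.of_forall fun y =>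
      mul_nonneg (Real.exp_pos _).le ENNReal.toReal_nonneg
  have hmeasexp : Measurable fun y : Fin m → ℝ => Real.exp (-(∑ i, l i * y i)) := by
    apply Real.measurable_exp.comp
    apply Measurable.neg
    exact Finset.measurable_sum _ fun i _ => (measurable_pi_apply i).const_mul _
  rw [integral_eq_lintegral_of_nonneg_ae hnn
    (hmeasexp.mul hmeasvol.ennreal_toReal).aestronglyMeasurable]
  -- compute the lintegral
  have step1 : ∫⁻ y : Fin m → ℝ, ENNReal.ofReal (Real.exp (-(∑ i, l i * y i)) *
        (volume {x : Fin n → ℝ | (∀ j, 0 ≤ x j) ∧ ∀ i, A.mulVec x i ≤ y i}).toReal)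
      = ∫⁻ y : Fin m → ℝ, ∫⁻ x : Fin n → ℝ,
          T.indicator (fun p => ENNReal.ofReal (Real.exp (-(∑ i, l i * p.1 i)))) (y, x) := by
    refine lintegral_congr fun y => ?_
    rw [ENNReal.ofReal_mul (Real.exp_pos _).le,
      ENNReal.ofReal_toReal (hfin y)]
    have : ∀ x : Fin n → ℝ,
        T.indicator (fun p => ENNReal.ofReal (Real.exp (-(∑ i, l i * p.1 i)))) (y, x)
        = Set.indicator {x : Fin n → ℝ | (∀ j, 0 ≤ x j) ∧ ∀ i, A.mulVec x i ≤ y i}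
            (fun _ => ENNReal.ofReal (Real.exp (-(∑ i, l i * y i)))) x := by
      intro x
      by_cases hx : (x : Fin n → ℝ) ∈ Prod.mk y ⁻¹' T
      · have h1 : (y, x) ∈ T := hx
        have h2 : x ∈ {x : Fin n → ℝ | (∀ j, 0 ≤ x j) ∧ ∀ i, A.mulVec x i ≤ y i} := by
          rw [hSeq]; exact hx
        rw [Set.indicator_of_mem h1, Set.indicator_of_mem h2]
      · have h1 : (y, x) ∉ T := hx
        have h2 : x ∉ {x : Fin n → ℝ | (∀ j, 0 ≤ x j) ∧ ∀ i, A.mulVec x i ≤ y i} := by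
          rw [hSeq]; exact hx
        rw [Set.indicator_of_notMem h1, Set.indicator_of_notMem h2]
    simp_rw [this]
    rw [lintegral_indicator (by rw [hSeq]; exact measurable_prodMk_left hT),
      setLIntegral_const]
  rw [step1]
  have hFmeas : Measurable
      (T.indicator fun p : (Fin m → ℝ) × (Fin n → ℝ) =>
        ENNReal.ofReal (Real.exp (-(∑ i, l i * p.1 i)))) := by
    exact ((hmeasexp.comp measurable_fst).ennreal_ofReal).indicator hT
  rw [lintegral_lintegral_swap (f := fun (y : Fin m → ℝ) (x : Fin n → ℝ) =>
    T.indicator (fun p => ENNReal.ofReal (Real.exp (-(∑ i, l i * p.1 i)))) (y, x))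
    ((hFmeas.comp (measurable_fst.prodMk measurable_snd)).aemeasurable)]
  -- inner integral over y for fixed x
  have step2 : ∀ x : Fin n → ℝ,
      (∫⁻ y : Fin m → ℝ,
        T.indicator (fun p => ENNReal.ofReal (Real.exp (-(∑ i, l i * p.1 i)))) (y, x))
      = Set.indicator {x : Fin n → ℝ | ∀ j, 0 ≤ x j}
          (fun x => ∏ i, ENNReal.ofReal (Real.exp (-(l i * A.mulVec x i)) / l i)) x := by
    intro x
    by_cases hx : ∀ j, 0 ≤ x j
    · have hxmem : x ∈ {x : Fin n → ℝ | ∀ j, 0 ≤ x j} := hx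
      rw [Set.indicator_of_mem hxmem]
      have : ∀ y : Fin m → ℝ,
          T.indicator (fun p => ENNReal.ofReal (Real.exp (-(∑ i, l i * p.1 i)))) (y, x)
          = Set.indicator {y : Fin m → ℝ | ∀ i, A.mulVec x i ≤ y i}
              (fun y => ENNReal.ofReal (Real.exp (-(∑ i, l i * y i)))) y := by
        intro y
        by_cases hy : ∀ i, A.mulVec x i ≤ y i
        · have h1 : (y, x) ∈ T := ⟨hx, hy⟩
          have h2 : y ∈ {y : Fin m → ℝ | ∀ i, A.mulVec x i ≤ y i} := hy
          rw [Set.indicator_of_mem h1, Set.indicator_of_mem h2]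
        · have h1 : (y, x) ∉ T := fun hmem => hy hmem.2
          have h2 : y ∉ {y : Fin m → ℝ | ∀ i, A.mulVec x i ≤ y i} := hy
          rw [Set.indicator_of_notMem h1, Set.indicator_of_notMem h2]
      simp_rw [this]
      have hmY : MeasurableSet {y : Fin m → ℝ | ∀ i, A.mulVec x i ≤ y i} := by
        rw [Set.setOf_forall]
        exact MeasurableSet.iInter fun i => measurableSet_le measurable_const (measurable_pi_apply i)
      rw [lintegral_indicator hmY]
      exact aux_multi l (A.mulVec x) hl
    · have hxmem : x ∉ {x : Fin n → ℝ | ∀ j, 0 ≤ x j} := hx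
      rw [Set.indicator_of_notMem hxmem]
      have : ∀ y : Fin m → ℝ,
          T.indicator (fun p => ENNReal.ofReal (Real.exp (-(∑ i, l i * p.1 i)))) (y, x) = 0 := by
        intro y
        exact Set.indicator_of_notMem (fun hmem => hx hmem.1) _
      simp_rw [this, lintegral_zero]
  simp_rw [step2]
  have hP : MeasurableSet {x : Fin n → ℝ | ∀ j, 0 ≤ x j} := by
    rw [Set.setOf_forall]
    exact MeasurableSet.iInter fun j => measurableSet_le measurable_const (measurable_pi_apply j)
  have hprod : ∀ x : Fin n → ℝ,
      (∏ i, ENNReal.ofReal (Real.exp (-(l i * A.mulVec x i)) / l i))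
      = (∏ i, ENNReal.ofReal (1 / l i)) * ENNReal.ofReal (Real.exp (-(∑ j, c j * x j))) := by
    intro x
    calc ∏ i, ENNReal.ofReal (Real.exp (-(l i * A.mulVec x i)) / l i)
        = ∏ i, (ENNReal.ofReal (1 / l i) *
            ENNReal.ofReal (Real.exp (-(l i * A.mulVec x i)))) := by
          refine Finset.prod_congr rfl fun i _ => ?_
          rw [← ENNReal.ofReal_mul (one_div_nonneg.mpr (hl i).le)]
          congr 1
          field_simp
      _ = (∏ i, ENNReal.ofReal (1 / l i)) *
            ∏ i, ENNReal.ofReal (Real.exp (-(l i * A.mulVec x i))) := Finset.prod_mul_distrib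
      _ = (∏ i, ENNReal.ofReal (1 / l i)) *
            ENNReal.ofReal (Real.exp (-(∑ j, c j * x j))) := by
          congr 1
          rw [← ENNReal.ofReal_prod_of_nonneg (fun i _ => (Real.exp_pos _).le), ← Real.exp_sum]
          congr 2
          rw [← hkey x, ← Finset.sum_neg_distrib]
  simp_rw [hprod]
  rw [lintegral_indicator hP]
  have hgm : Measurable fun x : Fin n → ℝ => ENNReal.ofReal (Real.exp (-(∑ j, c j * x j))) := by
    apply Measurable.ennreal_ofReal
    apply Real.measurable_exp.comp
    apply Measurable.neg
    exact Finset.measurable_sum _ fun j _ => (measurable_pi_apply j).const_mul _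
  rw [lintegral_const_mul _ hgm]
  have hlast : ∫⁻ x : Fin n → ℝ in {x | ∀ j, 0 ≤ x j},
      ENNReal.ofReal (Real.exp (-(∑ j, c j * x j))) = ∏ j, ENNReal.ofReal (1 / c j) := by
    have := aux_multi c (0 : Fin n → ℝ) hAl
    simpa using this
  rw [hlast]
  have hnn1 : ∀ i ∈ Finset.univ, (0:ℝ) ≤ 1 / l i := fun i _ => one_div_nonneg.mpr (hl i).le
  have hnn2 : ∀ j ∈ Finset.univ, (0:ℝ) ≤ 1 / c j := fun j _ => one_div_nonneg.mpr (hAl j).le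
  rw [← ENNReal.ofReal_prod_of_nonneg hnn1, ← ENNReal.ofReal_prod_of_nonneg hnn2,
      ← ENNReal.ofReal_mul (Finset.prod_nonneg hnn1),
      ENNReal.toReal_ofReal (mul_nonneg (Finset.prod_nonneg hnn1) (Finset.prod_nonneg hnn2))]
  rw [Finset.prod_div_distrib, Finset.prod_div_distrib, div_mul_div_comm]
  simp
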